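/- For the 2×2 upper triangular real matrices M1 = [[(π−α)/2, −(π+α)/2·ε],[0, −(π−α)/2]] and M2 = [[(π+α)/2, (π−α)/2·ε],[0, −(π+α)/2]] with −π < α < π and ε ≠ 0, the product exp(iM1)·exp(iM2) (as 2×2 complex matrices) equals [[−1, −ε(π²+α²)(1+e^{−iα})/(π²−α²)],[0, −1]]. -/

import Mathlib

open Real Complex

lemma exp_tri (a b : ℂ) (ha : a ≠ 0) :
    NormedSpace.exp !![a, b; 0, -a] =
      !![Complex.exp a, b * (Complex.exp a - Complex.exp (-a)) / (2*a);
         0, Complex.exp (-a)] := by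
  have h2a : (2:ℂ) * a ≠ 0 := by simp [ha]
  set P : Matrix (Fin 2) (Fin 2) ℂ := !![1, b; 0, -2*a] with hP
  set Q : Matrix (Fin 2) (Fin 2) ℂ := !![1, b/(2*a); 0, -1/(2*a)] with hQ
  have hPQ : P * Q = 1 := by
    rw [hP, hQ]
    ext i j
    fin_cases i <;> fin_cases j <;>
      simp [Matrix.mul_apply, Fin.sum_univ_two, Matrix.one_apply] <;>
      field_simp <;> ring
  have hunit : IsUnit P := by
    rw [Matrix.isUnit_iff_isUnit_det, hP, Matrix.det_fin_two_of]
    simp [isUnit_iff_ne_zero, ha]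
  have hinv : P⁻¹ = Q := Matrix.inv_eq_right_inv hPQ
  have hA : !![a, b; 0, -a] = P * Matrix.diagonal ![a, -a] * P⁻¹ := by
    rw [hinv, hP, hQ]
    ext i j
    fin_cases i <;> fin_cases j <;>
      simp [Matrix.mul_apply, Fin.sum_univ_two, Matrix.diagonal_apply,
        Matrix.vecMul_diagonal, Matrix.vecHead, Matrix.vecTail] <;>
      field_simp <;> ring
  rw [hA, Matrix.exp_conj P (Matrix.diagonal ![a, -a]) hunit,
    Matrix.exp_diagonal, hinv, hP, hQ]
  ext i j
  fin_cases i <;> fin_cases j <;>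
    simp [Matrix.mul_apply, Fin.sum_univ_two, Matrix.diagonal_apply,
      Matrix.vecMul_diagonal, Matrix.vecHead, Matrix.vecTail, Pi.exp_def,
      ← Complex.exp_eq_exp_ℂ] <;>
    field_simp <;> ring

theorem exp_prod_minimal_example (α ε : ℝ) (hα₁ : -π < α) (hα₂ : α < π) (hε : ε ≠ 0) :
    NormedSpace.exp (Complex.I • (!![((π : ℂ) - α)/2, -((π : ℂ) + α)/2 * ε; 0, -((π : ℂ) - α)/2])) *
      NormedSpace.exp (Complex.I • (!![((π : ℂ) + α)/2, ((π : ℂ) - α)/2 * ε; 0, -((π : ℂ) + α)/2])) =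
    !![(-1 : ℂ), -(ε : ℂ) * ((π : ℂ)^2 + (α : ℂ)^2) * (1 + Complex.exp (-Complex.I * α)) / ((π : ℂ)^2 - (α : ℂ)^2); 0, -1] := by
  have hm : (π : ℝ) - α ≠ 0 := by linarith
  have hp : (π : ℝ) + α ≠ 0 := by linarith
  have hmc : (π : ℂ) - α ≠ 0 := by exact_mod_cast sub_ne_zero.2 (by exact_mod_cast sub_ne_zero.1 hm)
  have hpc : (π : ℂ) + α ≠ 0 := by
    intro h; apply hp; exact_mod_cast h
  set a1 : ℂ := Complex.I * (((π : ℂ) - α)/2) with ha1def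
  set b1 : ℂ := Complex.I * (-((π : ℂ) + α)/2 * ε) with hb1def
  set a2 : ℂ := Complex.I * (((π : ℂ) + α)/2) with ha2def
  set b2 : ℂ := Complex.I * (((π : ℂ) - α)/2 * ε) with hb2def
  have ha1 : a1 ≠ 0 := by
    rw [ha1def]; exact mul_ne_zero Complex.I_ne_zero (by simpa using hmc)
  have ha2 : a2 ≠ 0 := by
    rw [ha2def]; exact mul_ne_zero Complex.I_ne_zero (by simpa using hpc)
  have hm1 : Complex.I • (!![((π : ℂ) - α)/2, -((π : ℂ) + α)/2 * ε; 0, -((π : ℂ) - α)/2]) =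
      !![a1, b1; 0, -a1] := by
    ext i j
    fin_cases i <;> fin_cases j <;> simp [ha1def, hb1def] <;> ring
  have hm2 : Complex.I • (!![((π : ℂ) + α)/2, ((π : ℂ) - α)/2 * ε; 0, -((π : ℂ) + α)/2]) =
      !![a2, b2; 0, -a2] := by
    ext i j
    fin_cases i <;> fin_cases j <;> simp [ha2def, hb2def] <;> ring
  rw [hm1, hm2, exp_tri _ _ ha1, exp_tri _ _ ha2]
  have h11 : Complex.exp a1 * Complex.exp a2 = -1 := by
    rw [← Complex.exp_add, show a1 + a2 = (π : ℂ) * Complex.I by rw [ha1def, ha2def]; ring,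
      Complex.exp_pi_mul_I]
  have h12 : Complex.exp a1 * Complex.exp (-a2) = Complex.exp (-(Complex.I * α)) := by
    rw [← Complex.exp_add]; congr 1; rw [ha1def, ha2def]; ring
  have h22 : Complex.exp (-a1) * Complex.exp (-a2) = -1 := by
    rw [← Complex.exp_add, show -a1 + -a2 = -((π : ℂ) * Complex.I) by rw [ha1def, ha2def]; ring,
      Complex.exp_neg, Complex.exp_pi_mul_I]
    norm_num
  have hd : (π : ℂ)^2 - (α : ℂ)^2 ≠ 0 := by
    have : (π : ℂ)^2 - (α : ℂ)^2 = ((π : ℂ) - α) * ((π : ℂ) + α) := by ring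
    rw [this]; exact mul_ne_zero hmc hpc
  ext i j
  fin_cases i <;> fin_cases j <;>
    simp only [Matrix.mul_apply, Fin.sum_univ_two, Matrix.cons_val', Matrix.cons_val_zero,
      Matrix.cons_val_one, Matrix.head_cons, Matrix.empty_val', Matrix.cons_val_fin_one,
      Matrix.of_apply]
  · simpa using h11
  · -- top right
    simp only [Fin.zero_eta, Fin.mk_one, Matrix.cons_val_zero, Matrix.cons_val_one,
      Matrix.head_cons, Matrix.cons_val_fin_one]
    rw [show -Complex.I * (α:ℂ) = -(Complex.I * α) from by ring]
    field_simp
    rw [mul_comm (α:ℂ) Complex.I]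
    linear_combination (((π : ℂ)^2 - α^2) * 2 * a1 * b2) * h11 +
      ((((π : ℂ)^2 - α^2) * 2 * a2 * b1) - (((π : ℂ)^2 - α^2) * 2 * a1 * b2)) * h12 -
      (((π : ℂ)^2 - α^2) * 2 * a2 * b1) * h22 +
      (Complex.I^2 * ε * (-(π:ℂ) * α^3/2 + (π:ℂ)^3 * α/2 - (π:ℂ)^4/4 + (α:ℂ)^4/4)) * h11 +
      (Complex.I^2 * ε * ((π:ℂ)^4/2 - (α:ℂ)^4/2)) * h12 +
      (Complex.I^2 * ε * ((π:ℂ) * α^3/2 - (π:ℂ)^3 * α/2 - (π:ℂ)^4/4 + (α:ℂ)^4/4)) * h22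
  · simp
  · simpa using h22
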